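/- If the global dimension of A is finite, then for any self-orthogonal A-module T one has add^∧T = _T X = add^∼T; that is, every module admitting a possibly infinite add T-resolution admits a finite one. -/

import Mathlib

open CategoryTheory CategoryTheory.Limits ZeroObject

namespace CategoryTheory.Triangulated

open Pretriangulated

variable (C : Type*) [Category C] [HasZeroObject C] [HasShift C ℤ] [Preadditive C]
  [∀ n : ℤ, (shiftFunctor C n).Additive] [Pretriangulated C]

/-- Port of the removed Mathlib structure `Triangulated.Subcategory` (Dec 2024). -/
structure Subcategory where
  P : C → Prop
  zero' : ∃ (Z : C) (_ : IsZero Z), P Z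
  shift (X : C) (n : ℤ) : P X → P (X⟦n⟧)
  ext₂' (T : Triangle C) (_ : T ∈ distTriang C) :
    P T.obj₁ → P T.obj₃ → ObjectProperty.isoClosure P T.obj₂

namespace Subcategory

variable {C} (S : Subcategory C)

lemma zero [ObjectProperty.IsClosedUnderIsomorphisms S.P] : S.P 0 := by
  obtain ⟨X, hX, mem⟩ := S.zero'
  exact ObjectProperty.prop_of_iso _ hX.isoZero mem

lemma ext₂ [ObjectProperty.IsClosedUnderIsomorphisms S.P] (T : Triangle C)
    (hT : T ∈ distTriang C) (h₁ : S.P T.obj₁) (h₃ : S.P T.obj₃) : S.P T.obj₂ := by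
  obtain ⟨Y, hY, ⟨e⟩⟩ := S.ext₂' T hT h₁ h₃
  exact ObjectProperty.prop_of_iso _ e.symm hY

/-- The class of morphisms whose cone lies in `S`. -/
def W : MorphismProperty C := fun X Y f => ∃ (Z : C) (g : Y ⟶ Z) (h : Z ⟶ X⟦(1 : ℤ)⟧)
  (_ : Triangle.mk f g h ∈ distTriang C), S.P Z

end Subcategory

end CategoryTheory.Triangulated

noncomputable section

variable (k : Type) [Field k] (A : Type) [Ring A] [Algebra k A] [FiniteDimensional k A]
variable [HasDerivedCategory (ModuleCat A)]

/-- The canonical functor sending a module to the associated stalk complex in degree 0. -/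
def Db : ModuleCat A ⥤ DerivedCategory (ModuleCat A) :=
  DerivedCategory.singleFunctor _ 0

/-- `ExtVanish A M N` means `Ext^i_A(M,N) = 0` for all `i ≥ 1`, expressed via
morphisms `M ⟶ N⟦i⟧` in the derived category. -/
def ExtVanish (M N : ModuleCat A) : Prop :=
  ∀ (i : ℤ), 1 ≤ i → ∀ f : (Db A).obj M ⟶ ((Db A).obj N)⟦i⟧, f = 0

/-- membership in `add T`. -/
def MemAdd (T X : ModuleCat A) : Prop :=
  ∃ (n : ℕ) (Y : ModuleCat A), Nonempty ((X ⊞ Y) ≅ (⨁ fun _ : Fin n => T))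

/-- a morphism factors through `add T`. -/
def FactorsAdd (T : ModuleCat A) {M N : ModuleCat A} (f : M ⟶ N) : Prop :=
  ∃ (Z : ModuleCat A) (u : M ⟶ Z) (v : Z ⟶ N), MemAdd A T Z ∧ f = u ≫ v

/-- The thick (triangulated, closed under direct summands) subcategory of the derived
category generated by a set of objects. -/
def genThick (S₀ : Set (DerivedCategory (ModuleCat A))) :
    Triangulated.Subcategory (DerivedCategory (ModuleCat A)) where
  P X := ∀ (S : Triangulated.Subcategory (DerivedCategory (ModuleCat A))),
      ObjectProperty.IsClosedUnderIsomorphisms S.P → (∀ Y Z, S.P (Y ⊞ Z) → S.P Y) →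
      (∀ Y ∈ S₀, S.P Y) → S.P X
  zero' := ⟨0, isZero_zero _, fun S hS _ _ => S.zero⟩
  shift X n hX := fun S h1 h2 h3 => S.shift X n (hX S h1 h2 h3)
  ext₂' T hT h1 h3 := ⟨T.obj₂, fun S hS hsum hgen =>
    S.ext₂ T hT (h1 S hS hsum hgen) (h3 S hS hsum hgen), ⟨Iso.refl _⟩⟩

/-- the generators of `K^b(add T)` inside the derived category. -/
def addTSet (T : ModuleCat A) : Set (DerivedCategory (ModuleCat A)) :=
  {X | ∃ M : ModuleCat A, MemAdd A T M ∧ X = (Db A).obj M}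

/-- `K^b(add T)` as a thick subcategory of the derived category. -/
def KbAdd (T : ModuleCat A) : Triangulated.Subcategory (DerivedCategory (ModuleCat A)) :=
  genThick A (addTSet A T)

/-- The Verdier quotient `D^b(A)/K^b(add T)`. -/
def DbQuot (T : ModuleCat A) := (KbAdd A T).W.Localization

instance (T : ModuleCat A) : Category (DbQuot A T) := by
  dsimp [DbQuot]; infer_instance

/-- The composition `A-mod → D^b(A) → D^b(A)/K^b(add T)`. -/
def toQuot (T : ModuleCat A) : ModuleCat A ⥤ DbQuot A T :=
  Db A ⋙ (KbAdd A T).W.Q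

end

noncomputable section
variable (k : Type) [Field k] (A : Type) [Ring A] [Algebra k A] [FiniteDimensional k A]
variable [HasDerivedCategory (ModuleCat A)]

/-- `X ∈ add^∼T`: there is a (possibly infinite) exact `add T`-resolution
`⋯ → T^{-1} → T^0 → X → 0`. -/
def MemAddResolve (T X : ModuleCat A) : Prop :=
  ∃ (C : ℕ → ModuleCat A) (d : ∀ n, C (n + 1) ⟶ C n) (ε : C 0 ⟶ X),
    (∀ n, MemAdd A T (C n)) ∧ Function.Surjective ε ∧
    Function.Exact (d 0) ε ∧ ∀ n, Function.Exact (d (n + 1)) (d n)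

/-- `X ∈ add^∧T`: there is a finite exact `add T`-resolution
`0 → T^{-n} → ⋯ → T^0 → X → 0`. -/
def MemAddWedge (T X : ModuleCat A) : Prop :=
  ∃ (m : ℕ) (C : ℕ → ModuleCat A) (d : ∀ n, C (n + 1) ⟶ C n) (ε : C 0 ⟶ X),
    (∀ n, MemAdd A T (C n)) ∧ Function.Surjective ε ∧
    Function.Exact (d 0) ε ∧ (∀ n, Function.Exact (d (n + 1)) (d n)) ∧
    ∀ n, m < n → Subsingleton (C n)

/-- `X ∈ _T X`: there is an exact `add T`-resolution `⋯ → T^{-1} → T^0 → X → 0`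
all of whose kernels lie in `T^⊥`. -/
def MemTX (T X : ModuleCat A) : Prop :=
  ∃ (C : ℕ → ModuleCat A) (d : ∀ n, C (n + 1) ⟶ C n) (ε : C 0 ⟶ X),
    (∀ n, MemAdd A T (C n)) ∧ Function.Surjective ε ∧
    Function.Exact (d 0) ε ∧ (∀ n, Function.Exact (d (n + 1)) (d n)) ∧
    ExtVanish A T (kernel ε) ∧ ∀ n, ExtVanish A T (kernel (d n))

end

noncomputable section Aux17

namespace Aux17

open CategoryTheory.Abelian DerivedCategory CategoryTheory.Pretriangulated

variable {A : Type} [Ring A] [HasDerivedCategory (ModuleCat A)]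

instance aux17HasExt : CategoryTheory.HasExt (ModuleCat A) :=
  CategoryTheory.hasExt_of_hasDerivedCategory (ModuleCat A)

variable (A) in
/-- Natural-number indexed Ext vanishing. -/
def EV (M N : ModuleCat A) : Prop := ∀ (p : ℕ), 1 ≤ p → ∀ x : Ext M N p, x = 0

lemma ev_of_extVanish {M N : ModuleCat A} (h : ExtVanish A M N) : EV A M N := by
  intro p hp x
  apply Ext.ext
  rw [Ext.zero_hom]
  exact h (p : ℤ) (by exact_mod_cast hp) x.hom

lemma extVanish_of_ev {M N : ModuleCat A} (h : EV A M N) : ExtVanish A M N := by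
  intro i hi f
  obtain ⟨p, rfl⟩ := Int.eq_ofNat_of_zero_le (by omega : (0:ℤ) ≤ i)
  let x : Ext M N p := Ext.homEquiv.symm f
  have hx : x.hom = f := Equiv.apply_symm_apply _ f
  rw [← hx, h p (by exact_mod_cast hi) x, Ext.zero_hom]
  rfl

lemma mk₀_add {X Y : ModuleCat A} (f g : X ⟶ Y) :
    Ext.mk₀ (f + g) = Ext.mk₀ f + Ext.mk₀ g := by
  apply Ext.ext
  rw [Ext.add_hom, Ext.mk₀_hom, Ext.mk₀_hom, Ext.mk₀_hom, Functor.map_add]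
  simp [ShiftedHom.mk₀, CategoryTheory.Preadditive.add_comp]

lemma mk₀_sum {X Y : ModuleCat A} {J : Type} (s : Finset J) (f : J → (X ⟶ Y)) :
    Ext.mk₀ (∑ j ∈ s, f j) = ∑ j ∈ s, Ext.mk₀ (f j) :=
  map_sum (AddMonoidHom.mk' (M := X ⟶ Y) Ext.mk₀ mk₀_add) f s

lemma comp_sum {M B N : ModuleCat A} {p q r : ℕ} (x : Ext M B p) {J : Type} (s : Finset J)
    (β : J → Ext B N q) (h : p + q = r) :
    x.comp (∑ j ∈ s, β j) h = ∑ j ∈ s, x.comp (β j) h :=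
  map_sum (Ext.bilinearComp M B N p q r h x) β s

lemma sum_comp {M B N : ModuleCat A} {p q r : ℕ} {J : Type} (s : Finset J)
    (α : J → Ext M B p) (y : Ext B N q) (h : p + q = r) :
    (∑ j ∈ s, α j).comp y h = ∑ j ∈ s, (α j).comp y h :=
  map_sum ((Ext.bilinearComp M B N p q r h).flip y) α s

open CategoryTheory.Limits in
lemma ev_right_biproduct {M T : ModuleCat A} (r p : ℕ)
    (h : ∀ x : Ext M T p, x = 0) (w : Ext M (⨁ fun _ : Fin r => T) p) : w = 0 := by
  have hw := Ext.comp_mk₀_id w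
  rw [← hw, ← biproduct.total, mk₀_sum, comp_sum]
  apply Finset.sum_eq_zero
  intro j _
  rw [← Ext.mk₀_comp_mk₀, ← Ext.comp_assoc_of_second_deg_zero,
    h (w.comp (Ext.mk₀ (biproduct.π _ j)) (add_zero p)), Ext.zero_comp]

open CategoryTheory.Limits in
lemma ev_left_biproduct {T N : ModuleCat A} (r p : ℕ)
    (h : ∀ x : Ext T N p, x = 0) (w : Ext (⨁ fun _ : Fin r => T) N p) : w = 0 := by
  have hw := Ext.mk₀_id_comp w
  rw [← hw, ← biproduct.total, mk₀_sum, sum_comp]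
  apply Finset.sum_eq_zero
  intro j _
  rw [← Ext.mk₀_comp_mk₀_assoc,
    h ((Ext.mk₀ (biproduct.ι _ j)).comp w (zero_add p)), Ext.comp_zero]

open CategoryTheory.Limits in
lemma ev_right_memAdd {M T C0 : ModuleCat A} (hC : MemAdd A T C0) (h : EV A M T) :
    EV A M C0 := by
  obtain ⟨r, Y, ⟨e⟩⟩ := hC
  intro p hp x
  have h1 : x.comp (Ext.mk₀ (biprod.inl ≫ e.hom)) (add_zero p) = 0 :=
    ev_right_biproduct r p (h p hp) _
  have hx : x = (x.comp (Ext.mk₀ (biprod.inl ≫ e.hom)) (add_zero p)).comp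
      (Ext.mk₀ (e.inv ≫ biprod.fst)) (add_zero p) := by
    rw [Ext.comp_assoc_of_second_deg_zero, Ext.mk₀_comp_mk₀]
    have : (biprod.inl ≫ e.hom) ≫ (e.inv ≫ biprod.fst) = 𝟙 C0 := by simp
    rw [this, Ext.comp_mk₀_id]
  rw [hx, h1, Ext.zero_comp]

open CategoryTheory.Limits in
lemma ev_left_memAdd {T N C0 : ModuleCat A} (hC : MemAdd A T C0) (h : EV A T N) :
    EV A C0 N := by
  obtain ⟨r, Y, ⟨e⟩⟩ := hC
  intro p hp x
  have h1 : (Ext.mk₀ (e.inv ≫ biprod.fst)).comp x (zero_add p) = 0 :=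
    ev_left_biproduct r p (h p hp) _
  have hx : x = (Ext.mk₀ (biprod.inl ≫ e.hom)).comp
      ((Ext.mk₀ (e.inv ≫ biprod.fst)).comp x (zero_add p)) (zero_add p) := by
    rw [Ext.mk₀_comp_mk₀_assoc]
    have : (biprod.inl ≫ e.hom) ≫ (e.inv ≫ biprod.fst) = 𝟙 C0 := by simp
    rw [this, Ext.mk₀_id_comp]
  rw [hx, h1, Ext.comp_zero]

lemma ev_right_iso {M N N' : ModuleCat A} (e : N ≅ N') (h : EV A M N) : EV A M N' := by
  intro p hp x
  have h1 : x.comp (Ext.mk₀ e.inv) (add_zero p) = 0 := h p hp _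
  have hx : x = (x.comp (Ext.mk₀ e.inv) (add_zero p)).comp (Ext.mk₀ e.hom) (add_zero p) := by
    rw [Ext.comp_assoc_of_second_deg_zero, Ext.mk₀_comp_mk₀, CategoryTheory.Iso.inv_hom_id,
      Ext.comp_mk₀_id]
  rw [hx, h1, Ext.zero_comp]

open CategoryTheory.ShortComplex in
lemma shortExact_mk' {K C0 Q : ModuleCat A} (f : K ⟶ C0) (g : C0 ⟶ Q) (w : f ≫ g = 0)
    (hf : Function.Injective f) (hg : Function.Surjective g)
    (hfg : ∀ x : C0, g x = 0 → ∃ y : K, f y = x) :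
    (CategoryTheory.ShortComplex.mk f g w).ShortExact := by
  have : CategoryTheory.Mono f := (ModuleCat.mono_iff_injective f).2 hf
  have : CategoryTheory.Epi g := (ModuleCat.epi_iff_surjective g).2 hg
  exact { exact := (CategoryTheory.ShortComplex.moduleCat_exact_iff _).2 hfg }

lemma covStep {S : CategoryTheory.ShortComplex (ModuleCat A)} (hS : S.ShortExact)
    {M : ModuleCat A} (p : ℕ)
    (h2 : ∀ x : Ext M S.X₂ p, x = 0) (h1 : ∀ x : Ext M S.X₁ (p + 1), x = 0) :
    ∀ x : Ext M S.X₃ p, x = 0 := by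
  intro x
  obtain ⟨y, hy⟩ := Ext.covariant_sequence_exact₃ M hS x rfl (h1 _)
  rw [← hy, h2 y, Ext.zero_comp]

lemma contraStep {S : CategoryTheory.ShortComplex (ModuleCat A)} (hS : S.ShortExact)
    {N : ModuleCat A} (p : ℕ)
    (h2 : ∀ x : Ext S.X₂ N p, x = 0) (h3 : ∀ x : Ext S.X₃ N (p + 1), x = 0) :
    ∀ x : Ext S.X₁ N p, x = 0 := by
  intro x
  obtain ⟨y, hy⟩ := Ext.contravariant_sequence_exact₁ hS N x (show 1 + p = p + 1 by omega) (h3 _)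
  rw [← hy, h2 y, Ext.comp_zero]

variable (A) in
/-- `H⁰` of the stalk complex in degree `0` is naturally isomorphic to the identity. -/
def etaIso : DerivedCategory.singleFunctor (ModuleCat A) 0 ⋙
    DerivedCategory.homologyFunctor (ModuleCat A) 0 ≅ 𝟭 (ModuleCat A) :=
  CategoryTheory.Functor.isoWhiskerRight
      ((CategoryTheory.SingleFunctors.evaluation _ _ 0).mapIso
        (DerivedCategory.singleFunctorsPostcompQIso (ModuleCat A)))
      (DerivedCategory.homologyFunctor (ModuleCat A) 0) ≪≫
    CategoryTheory.Functor.associator _ _ _ ≪≫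
    CategoryTheory.Functor.isoWhiskerLeft (CochainComplex.singleFunctor (ModuleCat A) 0)
      (DerivedCategory.homologyFunctorFactors (ModuleCat A) 0) ≪≫
    HomologicalComplex.homologyFunctorSingleIso (ModuleCat A) (ComplexShape.up ℤ) 0

open CategoryTheory in
lemma exists_section {S : ShortComplex (ModuleCat A)} (hS : S.ShortExact)
    (h1 : ∀ x : Ext S.X₃ S.X₁ 1, x = 0) : ∃ s : S.X₃ ⟶ S.X₂, s ≫ S.g = 𝟙 S.X₃ := by
  have hδ : hS.singleδ = 0 := by
    rw [← hS.extClass_hom, h1 hS.extClass, Ext.zero_hom]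
  obtain ⟨s'', hs'⟩ := Pretriangulated.Triangle.coyoneda_exact₃ _ hS.singleTriangle_distinguished
    (𝟙 _) (by simp [ShortComplex.ShortExact.singleTriangle, hδ]; exact Category.id_comp _)
  let s' : (DerivedCategory.singleFunctor (ModuleCat A) 0).obj S.X₃ ⟶
      (DerivedCategory.singleFunctor (ModuleCat A) 0).obj S.X₂ := s''
  have h2 : s' ≫ (DerivedCategory.singleFunctor (ModuleCat A) 0).map S.g =
      𝟙 ((DerivedCategory.singleFunctor (ModuleCat A) 0).obj S.X₃) := hs'.symm
  set H := DerivedCategory.homologyFunctor (ModuleCat A) 0 with hH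
  set η := etaIso A with hη
  refine ⟨η.inv.app S.X₃ ≫ H.map s' ≫ η.hom.app S.X₂, ?_⟩
  have hnat : η.hom.app S.X₂ ≫ S.g =
      H.map ((DerivedCategory.singleFunctor (ModuleCat A) 0).map S.g) ≫ η.hom.app S.X₃ := by
    simpa using (η.hom.naturality S.g).symm
  rw [Category.assoc, Category.assoc, hnat, ← Category.assoc (H.map s'), ← H.map_comp, h2]
  simp

open CategoryTheory CategoryTheory.Limits in
lemma memAdd_of_ses {T : ModuleCat A} {S : ShortComplex (ModuleCat A)} (hS : S.ShortExact)
    (h1 : ∀ x : Ext S.X₃ S.X₁ 1, x = 0) (hC : MemAdd A T S.X₂) : MemAdd A T S.X₃ := by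
  obtain ⟨s, hs⟩ := exists_section hS h1
  have : Mono S.f := hS.mono_f
  let sp := ShortComplex.Splitting.ofExactOfSection S hS.exact s hs hS.mono_f
  obtain ⟨r, Y, ⟨e⟩⟩ := hC
  refine ⟨r, S.X₁ ⊞ Y, ⟨?_⟩⟩
  calc S.X₃ ⊞ (S.X₁ ⊞ Y) ≅ (S.X₃ ⊞ S.X₁) ⊞ Y := (biprod.associator _ _ _).symm
    _ ≅ (S.X₁ ⊞ S.X₃) ⊞ Y := biprod.mapIso (biprod.braiding _ _) (Iso.refl Y)
    _ ≅ S.X₂ ⊞ Y := biprod.mapIso sp.isoBinaryBiproduct.symm (Iso.refl Y)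
    _ ≅ _ := e

open CategoryTheory CategoryTheory.Limits in
lemma memAdd_punit (T : ModuleCat A) : MemAdd A T (ModuleCat.of A PUnit) := by
  refine ⟨0, ModuleCat.of A PUnit, ⟨IsZero.iso ?_ ?_⟩⟩
  · haveI : Subsingleton (↑(ModuleCat.of A (↑(ModuleCat.of A PUnit) × ↑(ModuleCat.of A PUnit)))) :=
      inferInstanceAs (Subsingleton (PUnit × PUnit))
    exact IsZero.of_iso (ModuleCat.isZero_of_subsingleton _) (ModuleCat.biprodIsoProd _ _)
  · rw [IsZero.iff_id_eq_zero, ← biproduct.total]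
    simp

open CategoryTheory in
lemma wedge_of_memAdd {T X : ModuleCat A} (h : MemAdd A T X) : MemAddWedge A T X := by
  refine ⟨0, fun j => Nat.casesOn j X (fun _ => ModuleCat.of A PUnit), fun _ => 0, 𝟙 X,
    ?_, ?_, ?_, ?_, ?_⟩
  · intro n
    cases n with
    | zero => exact h
    | succ i => exact memAdd_punit T
  · intro x; exact ⟨x, rfl⟩
  · intro y
    constructor
    · intro hy
      exact ⟨0, by simp [show y = 0 from hy]⟩
    · rintro ⟨z, rfl⟩
      simp
  · intro n y
    constructor
    · intro _
      exact ⟨0, Subsingleton.elim _ _⟩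
    · intro _
      exact rfl
  · intro n hn
    cases n with
    | zero => omega
    | succ i => exact inferInstanceAs (Subsingleton PUnit)

open CategoryTheory in
lemma wedge_prepend {T K C0 X : ModuleCat A} (ι : K ⟶ C0) (π : C0 ⟶ X)
    (hιinj : Function.Injective ι) (hπ : Function.Surjective π)
    (hexι : Function.Exact ι π)
    (hC0 : MemAdd A T C0) (hK : MemAddWedge A T K) : MemAddWedge A T X := by
  obtain ⟨m, D, d, ε, hmem, hsur, hex0, hexs, hsub⟩ := hK
  refine ⟨m + 1, fun j => Nat.casesOn j C0 (fun i => D i),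
    fun j => Nat.casesOn j (ε ≫ ι) (fun i => d i), π, ?_, hπ, ?_, ?_, ?_⟩
  · intro n
    cases n with
    | zero => exact hC0
    | succ i => exact hmem i
  · intro y
    constructor
    · intro hy
      obtain ⟨k, hk⟩ := (hexι y).1 hy
      obtain ⟨z, hz⟩ := hsur k
      refine ⟨z, ?_⟩
      show ι (ε z) = y
      rw [hz, hk]
    · rintro ⟨z, rfl⟩
      exact (hexι _).2 ⟨ε z, rfl⟩
  · intro n
    cases n with
    | zero =>
      intro y
      constructor
      · intro hy
        have hy' : ι (ε y) = ι 0 := by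
          rw [map_zero]
          exact hy
        exact (hex0 y).1 (hιinj hy')
      · intro hy
        have : ε y = 0 := (hex0 y).2 hy
        show ι (ε y) = 0
        rw [this, map_zero]
    | succ i => exact hexs i
  · intro n hn
    cases n with
    | zero => omega
    | succ i => exact hsub i (by omega)

/-! ### The tower of kernels of an `add T`-resolution -/

section Tower

variable {X : ModuleCat A} (C : ℕ → ModuleCat A) (d : ∀ n, C (n + 1) ⟶ C n) (ε : C 0 ⟶ X)

/-- The kernels of the resolution, as submodules. -/
def KS : ∀ j, Submodule A (C j)
  | 0 => LinearMap.ker ε.hom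
  | (j+1) => LinearMap.ker (d j).hom

/-- The kernels of the resolution, as objects. -/
def KK (j : ℕ) : ModuleCat A := ModuleCat.of A (KS C d ε j)

/-- inclusion of the kernel -/
def ιK (j : ℕ) : KK C d ε j ⟶ C j := ModuleCat.ofHom (KS C d ε j).subtype

lemma ιK_injective (j : ℕ) : Function.Injective (ιK C d ε j) :=
  Subtype.val_injective

variable (hex0 : Function.Exact (d 0) ε) (hexs : ∀ n, Function.Exact (d (n + 1)) (d n))

include hex0 hexs in
lemma mem_KS (j : ℕ) (x : C (j + 1)) : d j x ∈ KS C d ε j := by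
  cases j with
  | zero => exact LinearMap.mem_ker.2 (hex0.apply_apply_eq_zero x)
  | succ i => exact LinearMap.mem_ker.2 ((hexs i).apply_apply_eq_zero x)

include hex0 hexs in
/-- corestriction of the differential to the kernel -/
def πK (j : ℕ) : C (j + 1) ⟶ KK C d ε j :=
  ModuleCat.ofHom (LinearMap.codRestrict (KS C d ε j) (d j).hom (mem_KS C d ε hex0 hexs j))

include hex0 hexs in
lemma KS_eq_range (j : ℕ) : KS C d ε j = LinearMap.range (d j).hom := by
  cases j with
  | zero => exact LinearMap.exact_iff.1 hex0
  | succ i => exact LinearMap.exact_iff.1 (hexs i)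

lemma πK_surjective (j : ℕ) : Function.Surjective (πK C d ε hex0 hexs j) := by
  rintro ⟨y, hy⟩
  rw [KS_eq_range C d ε hex0 hexs j] at hy
  obtain ⟨x, hx⟩ := hy
  exact ⟨x, Subtype.ext hx⟩

lemma exact_ιπ (j : ℕ) :
    Function.Exact (ιK C d ε (j + 1)) (πK C d ε hex0 hexs j) := by
  intro y
  constructor
  · intro hy
    have hy' : d j y = 0 := congrArg Subtype.val hy
    exact ⟨⟨y, hy'⟩, rfl⟩
  · rintro ⟨z, rfl⟩
    exact Subtype.ext z.2

lemma exact_ιε (j : ℕ) :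
    Function.Exact (ιK C d ε 0) ε := by
  intro y
  constructor
  · intro hy
    exact ⟨⟨y, hy⟩, rfl⟩
  · rintro ⟨z, rfl⟩
    exact z.2

/-- The short exact sequence `0 → K_{j+1} → C_{j+1} → K_j → 0`. -/
def SK (j : ℕ) : CategoryTheory.ShortComplex (ModuleCat A) :=
  CategoryTheory.ShortComplex.mk (ιK C d ε (j + 1)) (πK C d ε hex0 hexs j) (by
    ext x
    exact Subtype.ext x.2)

lemma SK_shortExact (j : ℕ) : (SK C d ε hex0 hexs j).ShortExact :=
  shortExact_mk' _ _ _ (ιK_injective C d ε (j + 1)) (πK_surjective C d ε hex0 hexs j)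
    (fun x hx => (exact_ιπ C d ε hex0 hexs j x).1 hx)

variable (n : ℕ)
    (hgl' : ∀ (M N : ModuleCat A) (p : ℕ), n < p → ∀ x : Ext M N p, x = 0)
    {T : ModuleCat A} (hT : EV A T T) (hmem : ∀ j, MemAdd A T (C j))

include hex0 hexs hgl' hT hmem in
lemma tower_ev : ∀ j, EV A T (KK C d ε j) := by
  have main : ∀ (q j p : ℕ), 1 ≤ p → n + 1 ≤ p + q → ∀ x : Ext T (KK C d ε j) p, x = 0 := by
    intro q
    induction q with
    | zero =>
      intro j p _ hq x
      exact hgl' _ _ p (by omega) x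
    | succ q ih =>
      intro j p hp hq x
      by_cases hcase : n < p
      · exact hgl' _ _ p hcase x
      · exact covStep (SK_shortExact C d ε hex0 hexs j) p
          (fun y => ev_right_memAdd (hmem (j + 1)) hT p hp y)
          (fun y => ih (j + 1) (p + 1) (by omega) (by omega) y) x
  intro j p hp x
  exact main (n + 1) j p hp (by omega) x

include hex0 hexs hgl' hmem in
lemma tower_left {N : ModuleCat A} (hN : EV A T N) :
    ∀ j p, 1 ≤ p → n + 1 ≤ p + j → ∀ x : Ext (KK C d ε j) N p, x = 0 := by
  intro j
  induction j with
  | zero =>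
    intro p _ hq x
    exact hgl' _ _ p (by omega) x
  | succ j ih =>
    intro p hp hq x
    exact contraStep (SK_shortExact C d ε hex0 hexs j) p
      (fun y => ev_left_memAdd (hmem (j + 1)) hN p hp y)
      (fun y => ih (p + 1) (by omega) (by omega) y) x

include hex0 hexs hgl' hT hmem in
lemma tower_memAdd_top : MemAdd A T (KK C d ε n) := by
  have hN : EV A T (KK C d ε (n + 1)) := tower_ev C d ε hex0 hexs n hgl' hT hmem (n + 1)
  have h1 : ∀ x : Ext (KK C d ε n) (KK C d ε (n + 1)) 1, x = 0 :=
    tower_left C d ε hex0 hexs n hgl' hmem hN n 1 (by omega) (by omega)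
  exact memAdd_of_ses (SK_shortExact C d ε hex0 hexs n) h1 (hmem (n + 1))

include hex0 hexs hgl' hT hmem in
lemma tower_wedge (hsur : Function.Surjective ε) : MemAddWedge A T X := by
  have hW : ∀ t, MemAddWedge A T (KK C d ε (n - t)) := by
    intro t
    induction t with
    | zero =>
      simpa using wedge_of_memAdd (tower_memAdd_top C d ε hex0 hexs n hgl' hT hmem)
    | succ t ih =>
      rcases le_or_gt n t with h | h
      · have e : n - (t + 1) = n - t := by omega
        rw [e]
        exact ih
      · have e : n - t = (n - (t + 1)) + 1 := by omega
        rw [e] at ih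
        exact wedge_prepend (ιK C d ε ((n - (t + 1)) + 1)) (πK C d ε hex0 hexs (n - (t + 1)))
          (ιK_injective C d ε _) (πK_surjective C d ε hex0 hexs _)
          (exact_ιπ C d ε hex0 hexs _) (hmem _) ih
  have h0 : MemAddWedge A T (KK C d ε 0) := by
    have := hW n
    rwa [Nat.sub_self] at this
  exact wedge_prepend (ιK C d ε 0) ε (ιK_injective C d ε 0) hsur
    (exact_ιε C d ε 0) (hmem 0) h0

end Tower

end Aux17

end Aux17

noncomputable section
variable (k : Type) [Field k] (A : Type) [Ring A] [Algebra k A] [FiniteDimensional k A]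
variable [HasDerivedCategory (ModuleCat A)]

/-- `A` has finite global dimension, expressed via uniform `Ext`-vanishing. -/
def FinGlobalDim : Prop :=
  ∃ n : ℕ, ∀ (M N : ModuleCat A) (i : ℤ), (n : ℤ) < i →
    ∀ f : (Db A).obj M ⟶ ((Db A).obj N)⟦i⟧, f = 0

/-- If `gl.dim A < ∞`, then for any self-orthogonal module `T` one has
`add^∧T = _T X = add^∼T`. -/
theorem stmt_17 (hgl : FinGlobalDim A) (T : ModuleCat A) [Module.Finite A T]
    (hT : ExtVanish A T T) :
    ∀ X : ModuleCat A,
      (MemAddResolve A T X ↔ MemTX A T X) ∧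
      (MemAddResolve A T X ↔ MemAddWedge A T X) := by
  obtain ⟨n, hgln⟩ := hgl
  have hgl' : ∀ (M N : ModuleCat A) (p : ℕ), n < p → ∀ x : Abelian.Ext M N p, x = 0 := by
    intro M N p hp x
    apply Abelian.Ext.ext
    rw [Abelian.Ext.zero_hom]
    exact hgln M N (p : ℤ) (by exact_mod_cast hp) x.hom
  have hT' : Aux17.EV A T T := Aux17.ev_of_extVanish hT
  intro X
  constructor
  · constructor
    · rintro ⟨C, d, ε, h1, h2, h3, h4⟩
      refine ⟨C, d, ε, h1, h2, h3, h4, ?_, ?_⟩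
      · apply Aux17.extVanish_of_ev
        exact Aux17.ev_right_iso (ModuleCat.kernelIsoKer ε).symm
          (Aux17.tower_ev C d ε h3 h4 n hgl' hT' h1 0)
      · intro m
        apply Aux17.extVanish_of_ev
        exact Aux17.ev_right_iso (ModuleCat.kernelIsoKer (d m)).symm
          (Aux17.tower_ev C d ε h3 h4 n hgl' hT' h1 (m + 1))
    · rintro ⟨C, d, ε, h1, h2, h3, h4, _, _⟩
      exact ⟨C, d, ε, h1, h2, h3, h4⟩
  · constructor
    · rintro ⟨C, d, ε, h1, h2, h3, h4⟩
      exact Aux17.tower_wedge C d ε h3 h4 n hgl' hT' h1 h2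
    · rintro ⟨m, C, d, ε, h1, h2, h3, h4, _⟩
      exact ⟨C, d, ε, h1, h2, h3, h4⟩


end
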